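/- Let A be a profinite topological L-algebra, let B be a topological L-algebra, and let φ : A → B be a surjective continuous L-homomorphism that is a topological quotient map and whose kernel {p : A × A | φ p.1 = φ p.2} is closed in A × A. If B is countable, then B is compact, Hausdorff, totally disconnected and residually finite, hence profinite. -/

import Mathlib

open FirstOrder Language Structure

/-- Residual finiteness of a topological `L`-algebra. -/
def ResiduallyFinite (L : FirstOrder.Language) (A : Type*) [TopologicalSpace A]
    [L.Structure A] : Prop :=
  ∀ a b : A, a ≠ b →
    ∃ (F : Type) (_ : Finite F) (iT : TopologicalSpace F) (iS : L.Structure F),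
      letI := iT; letI := iS;
      DiscreteTopology F ∧ ∃ φ : A →[L] F, Continuous (φ : A → F) ∧ φ a ≠ φ b

set_option linter.unusedSectionVars false
set_option linter.unusedVariables false
set_option maxHeartbeats 1000000

open Relation

section MyAux

variable {L : FirstOrder.Language} {A B : Type*}

/-- A clopen congruence on a topological `L`-algebra. -/
def MyIsCC (L : FirstOrder.Language) (A : Type*) [TopologicalSpace A] [L.Structure A]
    (S : Set (A × A)) : Prop :=
  IsClopen S ∧ (∀ x, (x, x) ∈ S) ∧ (∀ x y, (x, y) ∈ S → (y, x) ∈ S) ∧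
    (∀ x y z, (x, y) ∈ S → (y, z) ∈ S → (x, z) ∈ S) ∧
    ∀ (n : ℕ) (f : L.Functions n) (v w : Fin n → A),
      (∀ i, (v i, w i) ∈ S) → (funMap f v, funMap f w) ∈ S

variable [TopologicalSpace A] [L.Structure A] [TopologicalSpace B] [L.Structure B]

/-- The image relation on `B` of a relation on `A`. -/
def MyRel (φ : A →[L] B) (S : Set (A × A)) : B → B → Prop :=
  fun b b' => ∃ x y : A, φ x = b ∧ φ y = b' ∧ (x, y) ∈ S

theorem myRel_refl {φ : A →[L] B} (hs : Function.Surjective φ) {S : Set (A × A)}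
    (hS : MyIsCC L A S) (b : B) : MyRel φ S b b := by
  obtain ⟨x, rfl⟩ := hs b
  exact ⟨x, x, rfl, rfl, hS.2.1 x⟩

theorem myRel_symm {φ : A →[L] B} {S : Set (A × A)} (hS : MyIsCC L A S) :
    Symmetric (MyRel φ S) := by
  rintro b b' ⟨x, y, hx, hy, hxy⟩
  exact ⟨y, x, hy, hx, hS.2.2.1 _ _ hxy⟩

theorem myRel_compat {φ : A →[L] B} {S : Set (A × A)} (hS : MyIsCC L A S)
    (n : ℕ) (f : L.Functions n) (v w : Fin n → B) (h : ∀ i, MyRel φ S (v i) (w i)) :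
    MyRel φ S (funMap f v) (funMap f w) := by
  choose x y hx hy hxy using h
  refine ⟨funMap f x, funMap f y, ?_, ?_, hS.2.2.2.2 n f x y hxy⟩
  · rw [φ.map_fun]
    exact congrArg _ (funext hx)
  · rw [φ.map_fun]
    exact congrArg _ (funext hy)

/-- The reflexive-transitive closure of a reflexive compatible relation is compatible. -/
theorem myReflTransGen_funMap {ρ : B → B → Prop} (hrefl : ∀ b, ρ b b)
    (hcompat : ∀ (n : ℕ) (f : L.Functions n) (v w : Fin n → B),
      (∀ i, ρ (v i) (w i)) → ρ (funMap f v) (funMap f w))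
    (n : ℕ) (f : L.Functions n) (v w : Fin n → B)
    (h : ∀ i, ReflTransGen ρ (v i) (w i)) :
    ReflTransGen ρ (funMap f v) (funMap f w) := by
  classical
  have step : ∀ (u : Fin n → B) (i : Fin n) (c : B), ReflTransGen ρ (u i) c →
      ReflTransGen ρ (funMap f u) (funMap f (Function.update u i c)) := by
    intro u i c hc
    induction hc with
    | refl => rw [Function.update_eq_self]
    | @tail b c hab hbc ih =>
      refine ih.tail (hcompat n f _ _ ?_)
      intro j
      rcases eq_or_ne j i with rfl | hj
      · simpa using hbc
      · rw [Function.update_of_ne hj, Function.update_of_ne hj]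
        exact hrefl _
  have main : ∀ k : ℕ,
      ReflTransGen ρ (funMap f v) (funMap f (fun i => if i.1 < k then w i else v i)) := by
    intro k
    induction k with
    | zero =>
      have hv : (fun i : Fin n => if i.1 < 0 then w i else v i) = v := by
        funext j; simp
      rw [hv]
    | succ k ih =>
      by_cases hk : k < n
      · have heq : (fun i : Fin n => if i.1 < k + 1 then w i else v i)
            = Function.update (fun i : Fin n => if i.1 < k then w i else v i)
              ⟨k, hk⟩ (w ⟨k, hk⟩) := by
          funext j
          rcases eq_or_ne j ⟨k, hk⟩ with rfl | hj
          · simp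
          · have hjk : j.1 ≠ k := fun hh => hj (Fin.ext hh)
            rw [Function.update_of_ne hj]
            by_cases h2 : j.1 < k
            · simp [h2, Nat.lt_succ_of_lt h2]
            · have h3 : ¬ j.1 < k + 1 := by omega
              simp [h2, h3]
        rw [heq]
        refine ih.trans (step _ ⟨k, hk⟩ _ ?_)
        simpa using h ⟨k, hk⟩
      · have heq : (fun i : Fin n => if i.1 < k + 1 then w i else v i)
            = fun i : Fin n => if i.1 < k then w i else v i := by
          funext j
          have h1 : j.1 < k := lt_of_lt_of_le j.2 (Nat.le_of_not_lt hk)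
          simp [h1, Nat.lt_succ_of_lt h1]
        rw [heq]; exact ih
  have hw : (fun i : Fin n => if i.1 < n then w i else v i) = w := by
    funext j; simp [j.2]
  have := main n
  rwa [hw] at this

/-- A set bisaturated with respect to an open reflexive relation is open. -/
theorem myBisat_open {S : Set (A × A)} (hSo : IsOpen S) (hrefl : ∀ x, (x, x) ∈ S)
    {Q : Set (A × A)}
    (hbi : ∀ p q : A × A, p ∈ Q → (p.1, q.1) ∈ S → (p.2, q.2) ∈ S → q ∈ Q) :
    IsOpen Q := by
  rw [isOpen_iff_mem_nhds]
  intro p hp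
  have h1 : IsOpen {q : A × A | (p.1, q.1) ∈ S ∧ (p.2, q.2) ∈ S} := by
    refine IsOpen.inter ?_ ?_
    · exact hSo.preimage (continuous_const.prodMk continuous_fst)
    · exact hSo.preimage (continuous_const.prodMk continuous_snd)
  refine Filter.mem_of_superset (h1.mem_nhds ⟨hrefl p.1, hrefl p.2⟩) ?_
  exact fun q hq => hbi p q hp hq.1 hq.2

theorem myQ_clopen {φ : A →[L] B}
    {S : Set (A × A)} (hS : MyIsCC L A S) :
    IsClopen {p : A × A | ReflTransGen (MyRel φ S) (φ p.1) (φ p.2)} := by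
  set Q := {p : A × A | ReflTransGen (MyRel φ S) (φ p.1) (φ p.2)} with hQ
  have hbi : ∀ p q : A × A, p ∈ Q → (p.1, q.1) ∈ S → (p.2, q.2) ∈ S → q ∈ Q := by
    intro p q hp h1 h2
    have ha : MyRel φ S (φ q.1) (φ p.1) := ⟨q.1, p.1, rfl, rfl, hS.2.2.1 _ _ h1⟩
    have hb : MyRel φ S (φ p.2) (φ q.2) := ⟨p.2, q.2, rfl, rfl, h2⟩
    exact ((ReflTransGen.single ha).trans hp).tail hb
  have hbic : ∀ p q : A × A, p ∈ Qᶜ → (p.1, q.1) ∈ S → (p.2, q.2) ∈ S → q ∈ Qᶜ := by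
    intro p q hp h1 h2 hq'
    exact hp (hbi q p hq' (hS.2.2.1 _ _ h1) (hS.2.2.1 _ _ h2))
  constructor
  · rw [← isOpen_compl_iff]
    exact myBisat_open hS.1.isOpen hS.2.1 hbic
  · exact myBisat_open hS.1.isOpen hS.2.1 hbi

theorem myClass_clopen {φ : A →[L] B} (hq : Topology.IsQuotientMap (φ : A → B))
    (hs : Function.Surjective φ) {S : Set (A × A)} (hS : MyIsCC L A S) (b : B) :
    IsClopen {y : B | ReflTransGen (MyRel φ S) b y} := by
  obtain ⟨a0, rfl⟩ := hs b
  have hpre : (φ : A → B) ⁻¹' {y : B | ReflTransGen (MyRel φ S) (φ a0) y}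
      = (fun a => (a0, a)) ⁻¹' {p : A × A | ReflTransGen (MyRel φ S) (φ p.1) (φ p.2)} := rfl
  have hcont : Continuous fun a : A => (a0, a) := continuous_const.prodMk continuous_id
  have hQ := myQ_clopen (φ := φ) hS
  constructor
  · rw [← hq.isClosed_preimage, hpre]
    exact hQ.isClosed.preimage hcont
  · rw [← hq.isOpen_preimage, hpre]
    exact hQ.isOpen.preimage hcont

end MyAux

/-- A countable quotient of a profinite algebra by a closed congruence is profinite. -/
theorem countable_quotient_of_profinite_is_profinite (L : FirstOrder.Language)
    {A B : Type*}
    [TopologicalSpace A] [L.Structure A]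
    [CompactSpace A] [T2Space A] [TotallyDisconnectedSpace A]
    [TopologicalSpace B] [L.Structure B]
    (hA : ∀ (n : ℕ) (f : L.Functions n), Continuous fun v : Fin n → A => funMap f v)
    (hB : ∀ (n : ℕ) (f : L.Functions n), Continuous fun v : Fin n → B => funMap f v)
    (hres : ResiduallyFinite L A)
    (φ : A →[L] B) (hc : Continuous (φ : A → B)) (hs : Function.Surjective φ)
    (hq : Topology.IsQuotientMap (φ : A → B))
    (hker : IsClosed {p : A × A | φ p.1 = φ p.2})
    (hcount : Countable B) :
    CompactSpace B ∧ T2Space B ∧ TotallyDisconnectedSpace B ∧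
      ResiduallyFinite L B := by
  classical
  -- B is compact
  have hBc : CompactSpace B := by
    constructor
    rw [← hs.range_eq]
    exact isCompact_range hc
  -- fibers of φ are closed
  have hfib : ∀ b : B, IsClosed ((φ : A → B) ⁻¹' {b}) := by
    intro b
    obtain ⟨a, rfl⟩ := hs b
    have heq : ((φ : A → B) ⁻¹' {φ a} : Set A)
        = (fun x => (a, x)) ⁻¹' {p : A × A | φ p.1 = φ p.2} := by
      ext x
      simp [eq_comm]
    rw [heq]
    exact hker.preimage (continuous_const.prodMk continuous_id)
  -- φ is a closed map
  have hclosed : ∀ C : Set A, IsClosed C → IsClosed ((φ : A → B) '' C) := by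
    intro C hC
    rw [← hq.isClosed_preimage]
    have heq : (φ : A → B) ⁻¹' ((φ : A → B) '' C)
        = Prod.fst '' ({p : A × A | φ p.1 = φ p.2} ∩ (Set.univ ×ˢ C)) := by
      ext x
      constructor
      · rintro ⟨y, hy, hxy⟩
        exact ⟨(x, y), ⟨hxy.symm, Set.mem_univ _, hy⟩, rfl⟩
      · rintro ⟨⟨x', y⟩, ⟨hpe, -, hy⟩, rfl⟩
        exact ⟨y, hy, hpe.symm⟩
    rw [heq]
    exact ((hker.inter (isClosed_univ.prod hC)).isCompact.image continuous_fst).isClosed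
  -- B is Hausdorff
  have hBt2 : T2Space B := by
    constructor
    intro b1 b2 hne
    have hd : Disjoint ((φ : A → B) ⁻¹' {b1}) ((φ : A → B) ⁻¹' {b2}) := by
      rw [Set.disjoint_left]
      intro x h1 h2
      exact hne (h1.symm.trans h2)
    obtain ⟨U1, U2, hU1, hU2, hs1, hs2, hdisj⟩ :=
      NormalSpace.normal _ _ (hfib b1) (hfib b2) hd
    refine ⟨((φ : A → B) '' U1ᶜ)ᶜ, ((φ : A → B) '' U2ᶜ)ᶜ, ?_, ?_, ?_, ?_, ?_⟩
    · exact (hclosed _ hU1.isClosed_compl).isOpen_compl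
    · exact (hclosed _ hU2.isClosed_compl).isOpen_compl
    · rintro ⟨x, hx, hxe⟩
      exact hx (hs1 hxe)
    · rintro ⟨x, hx, hxe⟩
      exact hx (hs2 hxe)
    · rw [Set.disjoint_left]
      intro b hb1 hb2
      obtain ⟨a, rfl⟩ := hs b
      have ha1 : a ∈ U1 := by
        by_contra h
        exact hb1 ⟨a, h, rfl⟩
      have ha2 : a ∈ U2 := by
        by_contra h
        exact hb2 ⟨a, h, rfl⟩
      exact hdisj.ne_of_mem ha1 ha2 rfl
  haveI := hBc
  haveI := hBt2
  -- B is totally disconnected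
  have hBtd : TotallyDisconnectedSpace B := by
    constructor
    intro t _ ht
    intro x hx y hy
    by_contra hxy
    obtain ⟨f, hf0, hf1, -⟩ := exists_continuous_zero_one_of_isClosed
      (isClosed_singleton (x := x)) (isClosed_singleton (x := y))
      (by simpa [Set.disjoint_singleton] using hxy)
    have himage : IsPreconnected (f '' t) := ht.image f f.continuous.continuousOn
    have hIcc : Set.Icc (0 : ℝ) 1 ⊆ f '' t := by
      refine himage.Icc_subset ⟨x, hx, ?_⟩ ⟨y, hy, ?_⟩
      · simpa using hf0 (Set.mem_singleton x)
      · simpa using hf1 (Set.mem_singleton y)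
    have hcS : (Set.Icc (0 : ℝ) 1).Countable := ((Set.to_countable t).image f).mono hIcc
    have hcard : (Cardinal.mk (Set.Icc (0 : ℝ) 1)) ≤ Cardinal.aleph0 := by
      haveI : Countable (Set.Icc (0 : ℝ) 1) := Set.countable_coe_iff.mpr hcS
      exact Cardinal.mk_le_aleph0
    rw [Cardinal.mk_Icc_real zero_lt_one] at hcard
    exact absurd hcard (not_le.mpr Cardinal.aleph0_lt_continuum)
  haveI := hBtd
  refine ⟨hBc, hBt2, hBtd, ?_⟩
  -- Residual finiteness of B
  intro b0 b1 hb01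
  -- Step 1: find a clopen congruence R with ¬ ReflTransGen (MyRel φ R) b0 b1
  have key : ∃ R : Set (A × A), MyIsCC L A R ∧ ¬ ReflTransGen (MyRel φ R) b0 b1 := by
    by_contra hcon
    push_neg at hcon
    set C : Set B := {y | ∀ R : Set (A × A), MyIsCC L A R → ReflTransGen (MyRel φ R) b0 y}
      with hC
    have hb0C : b0 ∈ C := fun R hR => ReflTransGen.refl
    have hb1C : b1 ∈ C := fun R hR => hcon R hR
    have hCclosed : IsClosed C := by
      have heq : C = ⋂ (R : {R : Set (A × A) // MyIsCC L A R}),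
          {y : B | ReflTransGen (MyRel φ R.1) b0 y} := by
        ext y
        simp only [hC, Set.mem_setOf_eq, Set.mem_iInter, Subtype.forall]
      rw [heq]
      exact isClosed_iInter fun R => (myClass_clopen hq hs R.2 b0).isClosed
    -- find an isolated point of C
    haveI hCcompact : CompactSpace C := isCompact_iff_compactSpace.mp hCclosed.isCompact
    haveI : Nonempty C := ⟨⟨b0, hb0C⟩⟩
    obtain ⟨c0, hc0⟩ : ∃ c0 : C, (interior ({c0} : Set C)).Nonempty := by
      apply nonempty_interior_of_iUnion_of_closed (f := fun c : C => ({c} : Set C))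
      · exact fun c => isClosed_singleton
      · ext z
        simp
    have hopen : IsOpen ({c0} : Set C) := by
      have hmem : c0 ∈ interior ({c0} : Set C) := by
        obtain ⟨z, hz⟩ := hc0
        have hz' : z = c0 := Set.mem_singleton_iff.mp (interior_subset hz)
        rwa [hz'] at hz
      have h1 : interior ({c0} : Set C) = {c0} := by
        apply Set.Subset.antisymm interior_subset
        intro w hw
        rw [Set.mem_singleton_iff] at hw
        rw [hw]
        exact hmem
      rw [← h1]
      exact isOpen_interior
    obtain ⟨V, hV, hVpre⟩ := isOpen_induced_iff.mp hopen
    have hcV : (c0 : B) ∈ V := by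
      have : c0 ∈ (Subtype.val ⁻¹' V : Set C) := by
        rw [hVpre]; rfl
      exact this
    have hVC : V ∩ C = {(c0 : B)} := by
      ext z
      constructor
      · rintro ⟨hzV, hzC⟩
        have : (⟨z, hzC⟩ : C) ∈ (Subtype.val ⁻¹' V : Set C) := hzV
        rw [hVpre] at this
        rw [Set.mem_singleton_iff] at this ⊢
        exact congrArg Subtype.val this
      · rintro rfl
        exact ⟨hcV, c0.2⟩
    -- clopen W around c0 inside V
    obtain ⟨W, hW, hcW, hWV⟩ := compact_exists_isClopen_in_isOpen hV hcV
    -- a second point d in C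
    obtain ⟨d, hdC, hdc⟩ : ∃ d ∈ C, d ≠ (c0 : B) := by
      rcases eq_or_ne (c0 : B) b0 with h | h
      · exact ⟨b1, hb1C, fun h' => hb01 (h ▸ h').symm⟩
      · exact ⟨b0, hb0C, fun h' => h h'.symm⟩
    -- the open saturated neighborhood M of the diagonal
    set M : Set (A × A) := ((fun p : A × A => φ p.1) ⁻¹' W ∩ (fun p : A × A => φ p.2) ⁻¹' W)
      ∪ ((fun p : A × A => φ p.1) ⁻¹' Wᶜ ∩ (fun p : A × A => φ p.2) ⁻¹' Wᶜ) with hM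
    have hMopen : IsOpen M := by
      apply IsOpen.union
      · exact (hW.isOpen.preimage (hc.comp continuous_fst)).inter
          (hW.isOpen.preimage (hc.comp continuous_snd))
      · exact ((hW.compl.isOpen).preimage (hc.comp continuous_fst)).inter
          ((hW.compl.isOpen).preimage (hc.comp continuous_snd))
    have hMdiag : ∀ p : A × A, p.1 = p.2 → p ∈ M := by
      intro p hp
      by_cases h : φ p.1 ∈ W
      · refine Or.inl ⟨h, ?_⟩
        show φ p.2 ∈ W
        rw [← hp]; exact h
      · refine Or.inr ⟨h, ?_⟩
        show φ p.2 ∈ Wᶜ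
        rw [← hp]; exact h
    -- separate points by clopen congruences
    have hsep : ∀ p : A × A, p.1 ≠ p.2 → ∃ S, MyIsCC L A S ∧ p ∉ S := by
      intro p hp
      obtain ⟨F, hF, iT, iS, hdisc, ψ, hψc, hψne⟩ := hres p.1 p.2 hp
      letI := iT
      letI := iS
      haveI := hdisc
      refine ⟨{q : A × A | ψ q.1 = ψ q.2}, ⟨?_, ?_, ?_, ?_, ?_⟩, hψne⟩
      · have heq : {q : A × A | ψ q.1 = ψ q.2}
            = (fun q : A × A => ((ψ q.1 : F), (ψ q.2 : F))) ⁻¹' Set.diagonal F := by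
          ext q
          simp [Set.mem_diagonal_iff, eq_comm]
        rw [heq]
        exact (isClopen_discrete _).preimage
          ((hψc.comp continuous_fst).prodMk (hψc.comp continuous_snd))
      · intro x; rfl
      · intro x y h; exact h.symm
      · intro x y z h1 h2; exact h1.trans h2
      · intro n f v w h
        show ψ (funMap f v) = ψ (funMap f w)
        rw [ψ.map_fun, ψ.map_fun]
        exact congrArg _ (funext h)
    -- compactness: a single clopen congruence inside M
    obtain ⟨R, hR, hRM⟩ : ∃ R, MyIsCC L A R ∧ R ⊆ M := by
      have hKc : IsCompact Mᶜ := hMopen.isClosed_compl.isCompact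
      have hne' : ∀ p : A × A, p ∈ Mᶜ → p.1 ≠ p.2 := by
        intro p hp hpe
        exact hp (hMdiag p hpe)
      choose Sp hSp hSpn using fun p : ↥Mᶜ => hsep p.1 (hne' p.1 p.2)
      obtain ⟨t, ht⟩ := hKc.elim_finite_subcover (fun p : ↥Mᶜ => (Sp p)ᶜ)
        (fun p => (hSp p).1.isClosed.isOpen_compl)
        (fun q hq => Set.mem_iUnion.mpr ⟨⟨q, hq⟩, hSpn ⟨q, hq⟩⟩)
      refine ⟨⋂ p ∈ t, Sp p, ⟨?_, ?_, ?_, ?_, ?_⟩, ?_⟩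
      · exact isClopen_biInter_finset fun p _ => (hSp p).1
      · intro x
        simp only [Set.mem_iInter]
        exact fun p _ => (hSp p).2.1 x
      · intro x y h
        simp only [Set.mem_iInter] at h ⊢
        exact fun p hp => (hSp p).2.2.1 x y (h p hp)
      · intro x y z h1 h2
        simp only [Set.mem_iInter] at h1 h2 ⊢
        exact fun p hp => (hSp p).2.2.2.1 x y z (h1 p hp) (h2 p hp)
      · intro n f v w h
        simp only [Set.mem_iInter] at h ⊢
        intro p hp
        exact (hSp p).2.2.2.2 n f v w fun i => h i p hp
      · intro q hq
        by_contra hqM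
        obtain ⟨p, hp⟩ := Set.mem_iUnion.mp (ht hqM)
        simp only [Set.mem_iUnion] at hp
        obtain ⟨hpt, hqp⟩ := hp
        simp only [Set.mem_iInter] at hq
        exact hqp (hq p hpt)
    -- W is saturated for the closure of MyRel φ R
    have hWresp : ∀ x y : B, ReflTransGen (MyRel φ R) x y → (x ∈ W ↔ y ∈ W) := by
      intro x y h
      induction h with
      | refl => exact Iff.rfl
      | @tail b c hab hbc ih =>
        refine ih.trans ?_
        obtain ⟨u, v, hu, hv, huv⟩ := hbc
        rcases hRM huv with ⟨h1, h2⟩ | ⟨h1, h2⟩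
        · rw [← hu, ← hv] at *
          exact iff_of_true h1 h2
        · rw [← hu, ← hv] at *
          exact iff_of_false h1 h2
    -- contradiction
    have hcd : ReflTransGen (MyRel φ R) (c0 : B) d := by
      have h1 : ReflTransGen (MyRel φ R) b0 (c0 : B) := c0.2 R hR
      have h2 : ReflTransGen (MyRel φ R) b0 d := hdC R hR
      haveI : Std.Symm (MyRel φ R) := ⟨fun _ _ h => myRel_symm hR h⟩
      exact (Std.Symm.symm (r := ReflTransGen (MyRel φ R)) _ _ h1).trans h2
    have hdW : d ∈ W := (hWresp _ _ hcd).mp hcW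
    have : d ∈ V ∩ C := ⟨hWV hdW, hdC⟩
    rw [hVC] at this
    exact hdc this
  obtain ⟨R, hR, hRT⟩ := key
  -- Step 2: build the finite quotient algebra
  set T : B → B → Prop := ReflTransGen (MyRel φ R) with hT
  have hTrefl : ∀ b, T b b := fun b => ReflTransGen.refl
  have hTsymm : ∀ {x y}, T x y → T y x := fun h => by
    haveI : Std.Symm (MyRel φ R) := ⟨fun _ _ h => myRel_symm hR h⟩
    exact Std.Symm.symm (r := ReflTransGen (MyRel φ R)) _ _ h
  have hTtrans : ∀ {x y z}, T x y → T y z → T x z := fun h1 h2 => h1.trans h2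
  have hTcompat : ∀ (n : ℕ) (f : L.Functions n) (v w : Fin n → B),
      (∀ i, T (v i) (w i)) → T (funMap f v) (funMap f w) :=
    myReflTransGen_funMap (myRel_refl hs hR) (myRel_compat hR)
  let s : Setoid B := ⟨T, ⟨hTrefl, hTsymm, hTtrans⟩⟩
  -- the quotient structure
  letI FS : L.Structure (Quotient s) :=
    { funMap := fun {n} f x => ⟦funMap f (fun i => (x i).out)⟧
      RelMap := fun {n} r x => ∃ u : Fin n → B, (∀ i, (⟦u i⟧ : Quotient s) = x i) ∧ RelMap r u }
  have hmk_fun : ∀ (n : ℕ) (f : L.Functions n) (x : Fin n → B),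
      (⟦funMap f x⟧ : Quotient s) = funMap f (fun i => (⟦x i⟧ : Quotient s)) := by
    intro n f x
    show _ = (⟦funMap f (fun i => (⟦x i⟧ : Quotient s).out)⟧ : Quotient s)
    apply Quotient.sound
    apply hTcompat
    intro i
    exact hTsymm (Quotient.mk_out (x i))
  -- the quotient hom
  let ψ : B →[L] Quotient s :=
    { toFun := fun b => ⟦b⟧
      map_fun' := fun {n} f x => by
        show (⟦funMap f x⟧ : Quotient s) = funMap f fun i => (⟦x i⟧ : Quotient s)
        exact hmk_fun n f x
      map_rel' := fun {n} r x h => ⟨x, fun i => rfl, h⟩ }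
  have hψcoe : (ψ : B → Quotient s) = fun b => (⟦b⟧ : Quotient s) := rfl
  -- classes are clopen
  have hclassQ : ∀ b : B, IsClopen {y : B | T b y} := fun b => myClass_clopen hq hs hR b
  -- ψ is continuous for the discrete topology on the quotient
  letI iTQ : TopologicalSpace (Quotient s) := ⊥
  haveI hdiscQ : DiscreteTopology (Quotient s) := ⟨rfl⟩
  have hψcont : Continuous (ψ : B → Quotient s) := by
    rw [continuous_def]
    intro U _
    rw [isOpen_iff_mem_nhds]
    intro b hb
    refine Filter.mem_of_superset ((hclassQ b).isOpen.mem_nhds (hTrefl b)) ?_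
    intro y hy
    have : (⟦b⟧ : Quotient s) = ⟦y⟧ := Quotient.sound hy
    show (⟦y⟧ : Quotient s) ∈ U
    rw [← this]
    exact hb
  -- the quotient is finite
  haveI hQcompact : CompactSpace (Quotient s) := by
    constructor
    rw [← Set.range_eq_univ.mpr (show Function.Surjective (ψ : B → Quotient s) from fun q => Quotient.inductionOn q fun b => ⟨b, rfl⟩)]
    exact isCompact_range hψcont
  haveI hQfin : Finite (Quotient s) := finite_of_compact_of_discrete
  -- transport to Type 0
  obtain ⟨m, ⟨e⟩⟩ := Finite.exists_equiv_fin (Quotient s)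
  letI iSF : L.Structure (Fin m) := Equiv.inducedStructure (L := L) e
  letI iTF : TopologicalSpace (Fin m) := ⊥
  haveI : DiscreteTopology (Fin m) := ⟨rfl⟩
  let χ : B →[L] Fin m := ((Equiv.inducedStructureEquiv (L := L) e).toHom).comp ψ
  have hχcoe : ∀ b : B, χ b = e (ψ b) := fun b => rfl
  refine ⟨Fin m, inferInstance, iTF, iSF, ⟨rfl⟩, χ, ?_, ?_⟩
  · have : Continuous (e : Quotient s → Fin m) := continuous_of_discreteTopology
    exact this.comp hψcont
  · intro hcontra
    have h1 : ψ b0 = ψ b1 := e.injective hcontra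
    have h2 : (⟦b0⟧ : Quotient s) = ⟦b1⟧ := h1
    exact hRT (Quotient.exact h2)
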